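/- If a real-valued $2\pi$-periodic trigonometric polynomial $y$ solves the Babenko equation $\hat S y = 0$ (with real constants $c, g_0$), then its derivative lies in the kernel of the linearized Babenko operator: $\hat S_1(y)\,(\partial_u y) = 0$. (This is the zero eigenvalue of $\hat S_1$ associated with translational invariance of Stokes waves.) -/

import Mathlib

open MeasureTheory
open scoped Real

/-- A trigonometric polynomial `u ↦ ∑ₖ aₖ e^{iku}`, represented by its finitely supported
Fourier coefficients; multiplication of coefficients is convolution, which corresponds to
pointwise multiplication of the associated functions. -/
abbrev TrigPoly : Type := AddMonoidAlgebra ℂ ℤ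

/-- Evaluation of a trigonometric polynomial: `teval c u = ∑ k, c k * exp (i k u)`. -/
noncomputable def teval (c : TrigPoly) (u : ℝ) : ℂ :=
  Finsupp.sum c.coeff fun k a => a * Complex.exp (Complex.I * (k : ℂ) * (u : ℂ))

/-- The Fourier multiplier operator with symbol `m`. -/
noncomputable def mulOp (m : ℤ → ℂ) (c : TrigPoly) : TrigPoly :=
  Finsupp.sum c.coeff fun k a => AddMonoidAlgebra.single k (m k * a)

/-- The circular Hilbert transform `Ĥ e^{iku} = i sign(k) e^{iku}` (with `sign 0 = 0`). -/
noncomputable def Hop : TrigPoly → TrigPoly := mulOp fun k => Complex.I * (Int.sign k : ℂ)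

/-- The operator `k̂ e^{iku} = |k| e^{iku}`. -/
noncomputable def Kop : TrigPoly → TrigPoly := mulOp fun k => ((|k| : ℤ) : ℂ)

/-- Differentiation `∂ᵤ e^{iku} = i k e^{iku}`. -/
noncomputable def Dop : TrigPoly → TrigPoly := mulOp fun k => Complex.I * (k : ℂ)

/-- A trigonometric polynomial is real-valued. -/
def RealValued (c : TrigPoly) : Prop := ∀ u : ℝ, (teval c u).im = 0
/-- The Babenko operator `Ŝ y = c²k̂y - g₀[ xᵤ y - Ĥ(y yᵤ) ]` with `xᵤ = 1 + k̂y`,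
`yᵤ = ∂ᵤ y`. -/
noncomputable def Sop (c g0 : ℝ) (y : TrigPoly) : TrigPoly :=
  (c ^ 2 : ℂ) • Kop y - (g0 : ℂ) • ((1 + Kop y) * y - Hop (y * Dop y))

/-- The linearized Babenko operator
`Ŝ₁(y) f = (c²k̂ - g₀)f - g₀[ y (k̂f) + f (k̂y) + k̂(yf) ]`. -/
noncomputable def S1op (c g0 : ℝ) (y f : TrigPoly) : TrigPoly :=
  (c ^ 2 : ℂ) • Kop f - (g0 : ℂ) • f
    - (g0 : ℂ) • (y * Kop f + f * Kop y + Kop (y * f))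

lemma mulOp_apply (m : ℤ → ℂ) (c : TrigPoly) (j : ℤ) : (mulOp m c).coeff j = m j * c.coeff j := by
  classical
  rw [mulOp, AddMonoidAlgebra.coeff_finsuppSum, Finsupp.sum_apply]
  simp only [AddMonoidAlgebra.coeff_single, Finsupp.single_apply]
  rw [Finsupp.sum_ite_eq' c.coeff j (fun k a => m k * a)]
  by_cases h : j ∈ c.coeff.support
  · simp [h]
  · simp [h, Finsupp.notMem_support_iff.mp h]

lemma mulOp_add (m : ℤ → ℂ) (a b : TrigPoly) :
    mulOp m (a + b) = mulOp m a + mulOp m b := by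
  ext j; rw [AddMonoidAlgebra.coeff_add, Finsupp.add_apply, mulOp_apply, mulOp_apply, mulOp_apply,
    AddMonoidAlgebra.coeff_add, Finsupp.add_apply]; ring

lemma mulOp_sub (m : ℤ → ℂ) (a b : TrigPoly) :
    mulOp m (a - b) = mulOp m a - mulOp m b := by
  ext j; rw [AddMonoidAlgebra.coeff_sub, Finsupp.sub_apply, mulOp_apply, mulOp_apply, mulOp_apply,
    AddMonoidAlgebra.coeff_sub, Finsupp.sub_apply]; ring

lemma mulOp_smul (m : ℤ → ℂ) (r : ℂ) (a : TrigPoly) :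
    mulOp m (r • a) = r • mulOp m a := by
  ext j; rw [AddMonoidAlgebra.coeff_smul_apply, mulOp_apply, AddMonoidAlgebra.coeff_smul_apply, mulOp_apply,
    smul_eq_mul, smul_eq_mul]; ring

lemma mulOp_zero (m : ℤ → ℂ) : mulOp m 0 = 0 := by
  ext j; rw [mulOp_apply]; simp

lemma one_apply' (j : ℤ) : (1 : TrigPoly).coeff j = if j = 0 then 1 else 0 := by
  rw [AddMonoidAlgebra.one_def, AddMonoidAlgebra.coeff_single, Finsupp.single_apply]
  simp [eq_comm]

lemma Dop_one : Dop (1 : TrigPoly) = 0 := by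
  ext j
  rw [Dop, mulOp_apply, one_apply']
  by_cases h : j = 0 <;> simp [h]

lemma Dop_Hop (a : TrigPoly) : Dop (Hop a) = - Kop a := by
  ext j
  rw [Dop, Hop, Kop, mulOp_apply, mulOp_apply, AddMonoidAlgebra.coeff_neg, Finsupp.neg_apply, mulOp_apply]
  have hsign : (j : ℂ) * (Int.sign j : ℂ) = ((|j| : ℤ) : ℂ) := by
    norm_cast
    rw [Int.abs_eq_natAbs]
    exact Int.mul_sign_self j
  have h2 : Complex.I * (j : ℂ) * (Complex.I * (Int.sign j : ℂ) * a.coeff j)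
      = (Complex.I * Complex.I) * ((j : ℂ) * (Int.sign j : ℂ)) * a.coeff j := by ring
  rw [h2, hsign, Complex.I_mul_I]
  ring

lemma Dop_Kop (a : TrigPoly) : Dop (Kop a) = Kop (Dop a) := by
  ext j
  simp only [Dop, Kop, mulOp_apply]
  ring

lemma Dop_single (k : ℤ) (a : ℂ) :
    Dop (AddMonoidAlgebra.single k a) = AddMonoidAlgebra.single k (Complex.I * (k : ℂ) * a) := by
  ext j
  rw [Dop, mulOp_apply, AddMonoidAlgebra.coeff_single, AddMonoidAlgebra.coeff_single,
    Finsupp.single_apply, Finsupp.single_apply]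
  by_cases h : k = j
  · subst h; simp
  · simp [h]

noncomputable abbrev sgl (k : ℤ) (a : ℂ) : TrigPoly := AddMonoidAlgebra.single k a

lemma sgl_mul_sgl (k k' : ℤ) (v v' : ℂ) :
    sgl k v * sgl k' v' = sgl (k + k') (v * v') :=
  AddMonoidAlgebra.single_mul_single _ _ _ _

lemma Dop_sgl (k : ℤ) (a : ℂ) : Dop (sgl k a) = sgl k (Complex.I * (k : ℂ) * a) :=
  Dop_single k a

lemma Dop_add (a b : TrigPoly) : Dop (a + b) = Dop a + Dop b := mulOp_add _ a b
lemma Dop_add' (a b : TrigPoly) : Dop (a + b) = Dop a + Dop b := mulOp_add _ a b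
lemma Dop_zero : Dop (0 : TrigPoly) = 0 := mulOp_zero _

lemma Dop_single_mul (k : ℤ) (v : ℂ) (w : TrigPoly) :
    Dop (sgl k v * w) = Dop (sgl k v) * w + sgl k v * Dop w := by
  classical
  induction w using AddMonoidAlgebra.induction with
  | zero => rw [mul_zero, Dop_zero, mul_zero, zero_add, mul_zero]
  | single_add k' v' f' _ _ ih' =>
    simp only [mul_add, Dop_add, Dop_add', ih', Dop_sgl, sgl_mul_sgl]
    have h1 : sgl (k + k') (Complex.I * ((k + k' : ℤ) : ℂ) * (v * v'))
        = sgl (k + k') (Complex.I * (k : ℂ) * v * v')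
          + sgl (k + k') (v * (Complex.I * (k' : ℂ) * v')) := by
      rw [show sgl (k + k') (Complex.I * (k : ℂ) * v * v')
            + sgl (k + k') (v * (Complex.I * (k' : ℂ) * v'))
          = sgl (k + k') (Complex.I * (k : ℂ) * v * v' + v * (Complex.I * (k' : ℂ) * v'))
          from (AddMonoidAlgebra.single_add _ _ _).symm]
      congr 1
      push_cast
      ring
    rw [h1]
    ring

lemma Dop_mul (a b : TrigPoly) : Dop (a * b) = Dop a * b + a * Dop b := by
  classical
  induction a using AddMonoidAlgebra.induction with
  | zero => rw [zero_mul, Dop_zero, zero_mul, zero_add, zero_mul]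
  | single_add k v f _ _ ih =>
    simp only [add_mul, Dop_add, Dop_add', ih, Dop_single_mul]
    ring

lemma Dop_smul (r : ℂ) (a : TrigPoly) : Dop (r • a) = r • Dop a := mulOp_smul _ r a
lemma Dop_sub (a b : TrigPoly) : Dop (a - b) = Dop a - Dop b := mulOp_sub _ a b
lemma Kop_Dop (a : TrigPoly) : Kop (Dop a) = Dop (Kop a) := (Dop_Kop a).symm

lemma teval_zero (u : ℝ) : teval 0 u = 0 := by simp [teval]

lemma teval_add (a b : TrigPoly) (u : ℝ) : teval (a + b) u = teval a u + teval b u := by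
  unfold teval
  rw [AddMonoidAlgebra.coeff_add]
  apply Finsupp.sum_add_index' <;> intros <;> simp [add_mul]

lemma teval_sgl (k : ℤ) (a : ℂ) (u : ℝ) :
    teval (sgl k a) u = a * Complex.exp (Complex.I * (k : ℂ) * (u : ℂ)) := by
  unfold teval
  rw [AddMonoidAlgebra.coeff_single, Finsupp.sum_single_index]
  simp

lemma hasDerivAt_teval (z : TrigPoly) (u : ℝ) :
    HasDerivAt (fun v : ℝ => teval z v) (teval (Dop z) u) u := by
  classical
  induction z using AddMonoidAlgebra.induction with
  | zero =>
    simpa [Dop_zero, teval_zero] using hasDerivAt_const u (0 : ℂ)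
  | single_add k v f _ _ ih =>
    have hc : HasDerivAt (fun w : ℂ => Complex.exp (Complex.I * (k : ℂ) * w))
        (Complex.exp (Complex.I * (k : ℂ) * (u : ℂ)) * (Complex.I * (k : ℂ))) (u : ℂ) := by
      simpa using ((hasDerivAt_id (u : ℂ)).const_mul (Complex.I * (k : ℂ))).cexp
    have h1 : HasDerivAt (fun v' : ℝ => teval (sgl k v) v')
        (teval (Dop (sgl k v)) u) u := by
      have h2 := (hc.comp_ofReal).const_mul v
      rw [Dop_sgl, teval_sgl]
      have h3 : (fun v' : ℝ => v * Complex.exp (Complex.I * (k : ℂ) * (v' : ℂ)))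
          = fun v' : ℝ => teval (sgl k v) v' := by
        funext v'; rw [teval_sgl]
      rw [← h3]
      exact h2.congr_deriv (by ring)
    have this : HasDerivAt (fun v' : ℝ => teval (sgl k v) v' + teval f v') _ u := h1.add ih
    have heq : (fun v' : ℝ => teval (sgl k v) v' + teval f v')
        = fun v' : ℝ => teval (AddMonoidAlgebra.single k v + f) v' := by
      funext v'; rw [teval_add]
    rw [heq] at this
    simpa [Dop_add', Dop_sgl, teval_add] using this


lemma key_identity (c g0 : ℝ) (y : TrigPoly) :
    S1op c g0 y (Dop y) = Dop (Sop c g0 y) := by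
  rw [Sop, S1op, Dop_sub, Dop_smul, Dop_smul, Dop_sub, Dop_mul, Dop_add, Dop_one,
    Dop_Hop, Dop_Kop]
  rw [sub_sub, ← smul_add]
  congr 1
  congr 1
  ring


/-- If a real-valued 2π-periodic trigonometric polynomial y solves the Babenko equation
`Ŝ y = 0`, then its derivative lies in the kernel of the linearized Babenko operator:
`Ŝ₁(y)(∂ᵤ y) = 0` (the zero eigenvalue associated with translational invariance). -/
theorem deriv_mem_kernel_of_Babenko (c g0 : ℝ) (y : TrigPoly) (hy : RealValued y)
    (hS : ∀ u : ℝ, teval (Sop c g0 y) u = 0) :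
    ∀ u : ℝ, teval (S1op c g0 y (Dop y)) u = 0 := by
  intro u
  rw [key_identity]
  have h := hasDerivAt_teval (Sop c g0 y) u
  have heq : (fun v : ℝ => teval (Sop c g0 y) v) = fun _ => (0 : ℂ) := funext hS
  rw [heq] at h
  exact h.unique (hasDerivAt_const u 0)
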